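/- arXiv:1201.2280 — 2 statements merged into one kernel-verified Lean document; each statement's English description precedes it below -/
import Mathlib

section
/- Let 0 < s_0, s_1 < ∞, 0 < p_0, p_1, q_0, q_1 ≤ ∞, 0 < θ < 1, and set s = (1−θ)s_0 + θs_1, 1/p = (1−θ)/p_0 + θ/p_1, 1/q = (1−θ)/q_0 + θ/q_1. Then for every f in the intersection of the Besov spaces B^{s_0}_{p_0,q_0}(Ω) and B^{s_1}_{p_1,q_1}(Ω) (defined via moduli of smoothness on a domain Ω), one has ‖f | B^s_{p,q}(Ω)‖ ≤ C ‖f | B^{s_0}_{p_0,q_0}(Ω)‖^{1−θ} · ‖f | B^{s_1}_{p_1,q_1}(Ω)‖^θ. -/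
open MeasureTheory Set Classical
open scoped ENNReal

noncomputable section

/-- The `r`-th difference of `f` with step `h` on `Ω`, set to zero unless all the points
`x, x+h, …, x+rh` belong to `Ω`. -/
def diffOn {n : ℕ} (r : ℕ) (f : EuclideanSpace ℝ (Fin n) → ℝ)
    (Ω : Set (EuclideanSpace ℝ (Fin n))) (h x : EuclideanSpace ℝ (Fin n)) : ℝ :=
  if ∀ i : ℕ, i ≤ r → x + (i : ℝ) • h ∈ Ω then
    ∑ i ∈ Finset.range (r + 1), (-1 : ℝ) ^ (r - i) * (r.choose i : ℝ) * f (x + (i : ℝ) • h)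
  else 0

/-- The `r`-th modulus of smoothness `ω_r(f,t,Ω)_p = sup_{‖h‖ ≤ t} ‖Δ_h^r f(·,Ω) | L_p(Ω)‖`. -/
def modulus {n : ℕ} (r : ℕ) (f : EuclideanSpace ℝ (Fin n) → ℝ)
    (Ω : Set (EuclideanSpace ℝ (Fin n))) (p : ℝ≥0∞) (t : ℝ) : ℝ≥0∞ :=
  ⨆ h : {h : EuclideanSpace ℝ (Fin n) // ‖h‖ ≤ t},
    eLpNorm (diffOn r f Ω (h : EuclideanSpace ℝ (Fin n))) p (volume.restrict Ω)

/-- The Besov quasi-norm on `Ω` defined via moduli of smoothness,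
`‖f|L_p(Ω)‖ + (∫_0^1 t^{-sq} ω_r(f,t,Ω)_p^q dt/t)^{1/q}`, with the usual
supremum modification if `q = ∞`. -/
def besovNorm {n : ℕ} (s : ℝ) (p q : ℝ≥0∞) (r : ℕ) (f : EuclideanSpace ℝ (Fin n) → ℝ)
    (Ω : Set (EuclideanSpace ℝ (Fin n))) : ℝ≥0∞ :=
  eLpNorm f p (volume.restrict Ω) +
    (if q = ∞ then
      ⨆ t : {t : ℝ // t ∈ Ioo (0 : ℝ) 1},
        ENNReal.ofReal ((t : ℝ) ^ (-s)) * modulus r f Ω p (t : ℝ)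
    else
      (∫⁻ t in Ioo (0 : ℝ) 1,
        (ENNReal.ofReal (t ^ (-s)) * modulus r f Ω p t) ^ q.toReal *
          ENNReal.ofReal t⁻¹) ^ (1 / q.toReal))

private lemma lintegral_rpow_interp {α : Type*} [MeasurableSpace α] (μ : Measure α)
    (f : α → ℝ≥0∞) {a b u v : ℝ} (ha : 0 < a) (hb : 0 < b) (hu : 0 < u) (hv : 0 < v)
    (huv : u + v = 1) :
    ∫⁻ x, f x ^ (u * a + v * b) ∂μ ≤
      (∫⁻ x, f x ^ a ∂μ) ^ u * (∫⁻ x, f x ^ b ∂μ) ^ v := by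
  set c := u * a + v * b with hc
  have hc0 : 0 < c := by positivity
  have hu1 : u < 1 := by linarith
  have hconj : Real.HolderConjugate (1 / u) (1 / v) := by
    constructor
    · simp only [one_div, inv_inv, inv_one]; exact huv
    · positivity
    · positivity
  conv_lhs => rw [lintegral_def]
  refine iSup₂_le fun φ hφ => ?_
  have key : ∀ x, φ x = φ x ^ (u * a / c) * φ x ^ (v * b / c) := by
    intro x
    rw [← ENNReal.rpow_add_of_nonneg _ _
      (div_nonneg (mul_nonneg hu.le ha.le) hc0.le)
      (div_nonneg (mul_nonneg hv.le hb.le) hc0.le)]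
    rw [show u * a / c + v * b / c = 1 by field_simp; exact hc.symm, ENNReal.rpow_one]
  have hm1 : Measurable fun x => φ x ^ (u * a / c) := φ.measurable.pow_const _
  have hm2 : Measurable fun x => φ x ^ (v * b / c) := φ.measurable.pow_const _
  have e1 : ∀ x, (φ x ^ (u * a / c)) ^ (1 / u) = φ x ^ (a / c) := fun x => by
    rw [← ENNReal.rpow_mul]
    congr 1
    field_simp
  have e2 : ∀ x, (φ x ^ (v * b / c)) ^ (1 / v) = φ x ^ (b / c) := fun x => by
    rw [← ENNReal.rpow_mul]
    congr 1
    field_simp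
  have m1 : ∫⁻ x, φ x ^ (a / c) ∂μ ≤ ∫⁻ x, f x ^ a ∂μ := by
    refine lintegral_mono fun x => ?_
    calc φ x ^ (a / c) ≤ (f x ^ c) ^ (a / c) :=
          ENNReal.rpow_le_rpow (hφ x) (div_nonneg ha.le hc0.le)
      _ = f x ^ a := by rw [← ENNReal.rpow_mul]; congr 1; field_simp
  have m2 : ∫⁻ x, φ x ^ (b / c) ∂μ ≤ ∫⁻ x, f x ^ b ∂μ := by
    refine lintegral_mono fun x => ?_
    calc φ x ^ (b / c) ≤ (f x ^ c) ^ (b / c) :=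
          ENNReal.rpow_le_rpow (hφ x) (div_nonneg hb.le hc0.le)
      _ = f x ^ b := by rw [← ENNReal.rpow_mul]; congr 1; field_simp
  calc φ.lintegral μ = ∫⁻ x, φ x ∂μ := (φ.lintegral_eq_lintegral μ).symm
    _ = ∫⁻ x, ((fun x => φ x ^ (u * a / c)) * fun x => φ x ^ (v * b / c)) x ∂μ :=
        lintegral_congr fun x => key x
    _ ≤ (∫⁻ x, (φ x ^ (u * a / c)) ^ (1 / u) ∂μ) ^ (1 / (1 / u)) *
        (∫⁻ x, (φ x ^ (v * b / c)) ^ (1 / v) ∂μ) ^ (1 / (1 / v)) :=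
        ENNReal.lintegral_mul_le_Lp_mul_Lq μ hconj hm1.aemeasurable hm2.aemeasurable
    _ = (∫⁻ x, φ x ^ (a / c) ∂μ) ^ u * (∫⁻ x, φ x ^ (b / c) ∂μ) ^ v := by
        rw [one_div_one_div, one_div_one_div]
        rw [lintegral_congr e1, lintegral_congr e2]
    _ ≤ (∫⁻ x, f x ^ a ∂μ) ^ u * (∫⁻ x, f x ^ b ∂μ) ^ v :=
        mul_le_mul' (ENNReal.rpow_le_rpow m1 hu.le) (ENNReal.rpow_le_rpow m2 hv.le)

private lemma lintegral_rpow_le_essSup_mul {α : Type*} [MeasurableSpace α] (μ : Measure α)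
    (f : α → ℝ≥0∞) {b c : ℝ} (hb : 0 < b) (hbc : b ≤ c) :
    ∫⁻ x, f x ^ c ∂μ ≤ essSup f μ ^ (c - b) * ∫⁻ x, f x ^ b ∂μ := by
  have hc : 0 < c := lt_of_lt_of_le hb hbc
  conv_lhs => rw [lintegral_def]
  refine iSup₂_le fun φ hφ => ?_
  have hS : ∀ᵐ x ∂μ, f x ≤ essSup f μ := ENNReal.ae_le_essSup f
  have key : ∀ᵐ x ∂μ, φ x ≤ essSup f μ ^ (c - b) * φ x ^ (b / c) := by
    filter_upwards [hS] with x hx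
    have h2 : φ x ^ ((c - b) / c) ≤ essSup f μ ^ (c - b) := by
      calc φ x ^ ((c - b) / c) ≤ (f x ^ c) ^ ((c - b) / c) :=
            ENNReal.rpow_le_rpow (hφ x) (div_nonneg (by linarith) hc.le)
        _ ≤ (essSup f μ ^ c) ^ ((c - b) / c) :=
            ENNReal.rpow_le_rpow (ENNReal.rpow_le_rpow hx hc.le)
              (div_nonneg (by linarith) hc.le)
        _ = essSup f μ ^ (c - b) := by rw [← ENNReal.rpow_mul]; congr 1; field_simp
    calc φ x = φ x ^ ((c - b) / c) * φ x ^ (b / c) := by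
          rw [← ENNReal.rpow_add_of_nonneg _ _ (div_nonneg (by linarith) hc.le)
            (div_nonneg hb.le hc.le)]
          rw [show (c - b) / c + b / c = 1 by field_simp; ring, ENNReal.rpow_one]
      _ ≤ essSup f μ ^ (c - b) * φ x ^ (b / c) := mul_le_mul_left h2 _
  calc φ.lintegral μ = ∫⁻ x, φ x ∂μ := (φ.lintegral_eq_lintegral μ).symm
    _ ≤ ∫⁻ x, essSup f μ ^ (c - b) * φ x ^ (b / c) ∂μ := lintegral_mono_ae key
    _ = essSup f μ ^ (c - b) * ∫⁻ x, φ x ^ (b / c) ∂μ :=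
        lintegral_const_mul _ (φ.measurable.pow_const _)
    _ ≤ essSup f μ ^ (c - b) * ∫⁻ x, f x ^ b ∂μ := by
        refine mul_le_mul_right (lintegral_mono fun x => ?_) _
        calc φ x ^ (b / c) ≤ (f x ^ c) ^ (b / c) :=
              ENNReal.rpow_le_rpow (hφ x) (div_nonneg hb.le hc.le)
          _ = f x ^ b := by rw [← ENNReal.rpow_mul]; congr 1; field_simp

private lemma inv_eq_interp_top {θ : ℝ} (hθ0 : 0 < θ) {q₁ q : ℝ≥0∞}
    (hq₁0 : q₁ ≠ 0) (hq₁t : q₁ ≠ ∞) (h : q⁻¹ = ENNReal.ofReal θ * q₁⁻¹) :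
    q ≠ 0 ∧ q ≠ ∞ ∧ q₁.toReal = θ * q.toReal := by
  have hne : q⁻¹ ≠ 0 :=
    h ▸ mul_ne_zero (ENNReal.ofReal_pos.2 hθ0).ne' (ENNReal.inv_ne_zero.2 hq₁t)
  have hqt : q ≠ ∞ := ENNReal.inv_ne_zero.1 hne
  have hnt : q⁻¹ ≠ ∞ :=
    h ▸ ENNReal.mul_ne_top ENNReal.ofReal_ne_top (ENNReal.inv_ne_top.2 hq₁0)
  have hq0 : q ≠ 0 := ENNReal.inv_ne_top.1 hnt
  refine ⟨hq0, hqt, ?_⟩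
  have hr := congrArg ENNReal.toReal h
  rw [ENNReal.toReal_inv, ENNReal.toReal_mul, ENNReal.toReal_ofReal hθ0.le,
    ENNReal.toReal_inv] at hr
  have hA : 0 < q.toReal := ENNReal.toReal_pos hq0 hqt
  have hB : 0 < q₁.toReal := ENNReal.toReal_pos hq₁0 hq₁t
  have hA' : q.toReal ≠ 0 := hA.ne'
  have hB' : q₁.toReal ≠ 0 := hB.ne'
  field_simp at hr
  linarith [hr]

private lemma inv_eq_interp {θ : ℝ} (hθ0 : 0 < θ) (hθ1 : θ < 1) {q₀ q₁ q : ℝ≥0∞}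
    (hq₀0 : q₀ ≠ 0) (hq₀t : q₀ ≠ ∞) (hq₁0 : q₁ ≠ 0) (hq₁t : q₁ ≠ ∞)
    (h : q⁻¹ = ENNReal.ofReal (1 - θ) * q₀⁻¹ + ENNReal.ofReal θ * q₁⁻¹) :
    q ≠ 0 ∧ q ≠ ∞ ∧
      1 / q.toReal = (1 - θ) * (1 / q₀.toReal) + θ * (1 / q₁.toReal) := by
  have h1 : ENNReal.ofReal (1 - θ) * q₀⁻¹ ≠ 0 :=
    mul_ne_zero (ENNReal.ofReal_pos.2 (by linarith)).ne' (ENNReal.inv_ne_zero.2 hq₀t)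
  have hne : q⁻¹ ≠ 0 := by
    rw [h]
    intro hh
    exact h1 (by simpa using (add_eq_zero.1 hh).1)
  have hqt : q ≠ ∞ := ENNReal.inv_ne_zero.1 hne
  have ht0 : ENNReal.ofReal (1 - θ) * q₀⁻¹ ≠ ∞ :=
    ENNReal.mul_ne_top ENNReal.ofReal_ne_top (ENNReal.inv_ne_top.2 hq₀0)
  have ht1 : ENNReal.ofReal θ * q₁⁻¹ ≠ ∞ :=
    ENNReal.mul_ne_top ENNReal.ofReal_ne_top (ENNReal.inv_ne_top.2 hq₁0)
  have hnt : q⁻¹ ≠ ∞ := h ▸ ENNReal.add_ne_top.2 ⟨ht0, ht1⟩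
  have hq0 : q ≠ 0 := ENNReal.inv_ne_top.1 hnt
  refine ⟨hq0, hqt, ?_⟩
  have hr := congrArg ENNReal.toReal h
  rw [ENNReal.toReal_inv, ENNReal.toReal_add ht0 ht1, ENNReal.toReal_mul,
    ENNReal.toReal_mul, ENNReal.toReal_ofReal (by linarith : (0:ℝ) ≤ 1 - θ),
    ENNReal.toReal_ofReal hθ0.le, ENNReal.toReal_inv, ENNReal.toReal_inv] at hr
  rw [one_div, one_div, one_div, hr]

private lemma eLpNorm_interp_top {α : Type*} [MeasurableSpace α] (μ : Measure α) (g : α → ℝ)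
    {p₁ p : ℝ≥0∞} {θ : ℝ} (hθ0 : 0 < θ) (hθ1 : θ < 1)
    (hp₁0 : p₁ ≠ 0) (hp₁t : p₁ ≠ ∞) (hp : p⁻¹ = ENNReal.ofReal θ * p₁⁻¹) :
    eLpNorm g p μ ≤ eLpNorm g ∞ μ ^ (1 - θ) * eLpNorm g p₁ μ ^ θ := by
  obtain ⟨hp0, hpt, hP1⟩ := inv_eq_interp_top hθ0 hp₁0 hp₁t hp
  have hP : 0 < p.toReal := ENNReal.toReal_pos hp0 hpt
  have hP1' : 0 < p₁.toReal := ENNReal.toReal_pos hp₁0 hp₁t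
  have hle : p₁.toReal ≤ p.toReal := by nlinarith
  rw [eLpNorm_eq_lintegral_rpow_enorm_toReal hp0 hpt,
    eLpNorm_eq_lintegral_rpow_enorm_toReal hp₁0 hp₁t, eLpNorm_exponent_top]
  have key := lintegral_rpow_le_essSup_mul μ (fun x => (‖g x‖₊ : ℝ≥0∞)) hP1' hle
  have hSS : eLpNormEssSup g μ = essSup (fun x => (‖g x‖₊ : ℝ≥0∞)) μ := rfl
  rw [hSS]
  set S := essSup (fun x => (‖g x‖₊ : ℝ≥0∞)) μ with hSdef
  calc (∫⁻ x, (‖g x‖₊ : ℝ≥0∞) ^ p.toReal ∂μ) ^ (1 / p.toReal)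
      ≤ (S ^ (p.toReal - p₁.toReal) * ∫⁻ x, (‖g x‖₊ : ℝ≥0∞) ^ p₁.toReal ∂μ) ^ (1 / p.toReal) :=
        ENNReal.rpow_le_rpow key (by positivity)
    _ = S ^ ((p.toReal - p₁.toReal) * (1 / p.toReal)) *
        ((∫⁻ x, (‖g x‖₊ : ℝ≥0∞) ^ p₁.toReal ∂μ)) ^ (1 / p.toReal) := by
        rw [ENNReal.mul_rpow_of_nonneg _ _ (by positivity), ← ENNReal.rpow_mul]
    _ = S ^ (1 - θ) * ((∫⁻ x, (‖g x‖₊ : ℝ≥0∞) ^ p₁.toReal ∂μ) ^ (1 / p₁.toReal)) ^ θ := by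
        rw [← ENNReal.rpow_mul]
        congr 1
        · congr 1
          field_simp
          nlinarith
        · congr 1
          rw [hP1]
          field_simp
    _ ≤ S ^ (1 - θ) * ((∫⁻ x, (‖g x‖₊ : ℝ≥0∞) ^ p₁.toReal ∂μ) ^ (1 / p₁.toReal)) ^ θ := le_rfl

private lemma eLpNorm_interp {α : Type*} [MeasurableSpace α] (μ : Measure α) (g : α → ℝ)
    {p₀ p₁ p : ℝ≥0∞} {θ : ℝ} (hθ0 : 0 < θ) (hθ1 : θ < 1)
    (hp₀ : 0 < p₀) (hp₁ : 0 < p₁)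
    (hp : p⁻¹ = ENNReal.ofReal (1 - θ) * p₀⁻¹ + ENNReal.ofReal θ * p₁⁻¹) :
    eLpNorm g p μ ≤ eLpNorm g p₀ μ ^ (1 - θ) * eLpNorm g p₁ μ ^ θ := by
  rcases eq_or_ne p₀ ∞ with h₀ | h₀
  · rcases eq_or_ne p₁ ∞ with h₁ | h₁
    · subst h₀; subst h₁
      have hql : p⁻¹ = 0 := by simpa using hp
      have hpeq : p = ∞ := by simpa [ENNReal.inv_eq_zero] using hql
      subst hpeq
      rw [← ENNReal.rpow_add_of_nonneg _ _ (by linarith) hθ0.le,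
        show (1 - θ) + θ = (1:ℝ) by ring, ENNReal.rpow_one]
    · subst h₀
      have hp' : p⁻¹ = ENNReal.ofReal θ * p₁⁻¹ := by simpa using hp
      exact eLpNorm_interp_top μ g hθ0 hθ1 hp₁.ne' h₁ hp'
  · rcases eq_or_ne p₁ ∞ with h₁ | h₁
    · subst h₁
      have hp' : p⁻¹ = ENNReal.ofReal (1 - θ) * p₀⁻¹ := by simpa using hp
      have h := eLpNorm_interp_top μ g (by linarith : 0 < 1 - θ) (by linarith : 1 - θ < 1)
        hp₀.ne' h₀ hp'
      rw [show (1 : ℝ) - (1 - θ) = θ by ring] at h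
      calc eLpNorm g p μ ≤ eLpNorm g ∞ μ ^ θ * eLpNorm g p₀ μ ^ (1 - θ) := h
        _ = eLpNorm g p₀ μ ^ (1 - θ) * eLpNorm g ∞ μ ^ θ := mul_comm _ _
    · obtain ⟨hp0, hpt, hP⟩ := inv_eq_interp hθ0 hθ1 hp₀.ne' h₀ hp₁.ne' h₁ hp
      have hPp : 0 < p.toReal := ENNReal.toReal_pos hp0 hpt
      have hP0 : 0 < p₀.toReal := ENNReal.toReal_pos hp₀.ne' h₀
      have hP1 : 0 < p₁.toReal := ENNReal.toReal_pos hp₁.ne' h₁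
      have hPne : p.toReal ≠ 0 := hPp.ne'
      have hP0ne : p₀.toReal ≠ 0 := hP0.ne'
      have hP1ne : p₁.toReal ≠ 0 := hP1.ne'
      have hu : 0 < (1 - θ) * p.toReal / p₀.toReal := div_pos (mul_pos (by linarith) hPp) hP0
      have hv : 0 < θ * p.toReal / p₁.toReal := by positivity
      have huv : (1 - θ) * p.toReal / p₀.toReal + θ * p.toReal / p₁.toReal = 1 := by
        rw [show (1 - θ) * p.toReal / p₀.toReal + θ * p.toReal / p₁.toReal
            = p.toReal * ((1 - θ) * (1 / p₀.toReal) + θ * (1 / p₁.toReal)) by ring, ← hP]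
        field_simp
      have hsum : (1 - θ) * p.toReal / p₀.toReal * p₀.toReal
          + θ * p.toReal / p₁.toReal * p₁.toReal = p.toReal := by
        field_simp
        ring
      rw [eLpNorm_eq_lintegral_rpow_enorm_toReal hp0 hpt,
        eLpNorm_eq_lintegral_rpow_enorm_toReal hp₀.ne' h₀,
        eLpNorm_eq_lintegral_rpow_enorm_toReal hp₁.ne' h₁]
      have key := lintegral_rpow_interp μ (fun x => (‖g x‖₊ : ℝ≥0∞)) hP0 hP1 hu hv huv
      rw [hsum] at key
      calc (∫⁻ x, (‖g x‖₊ : ℝ≥0∞) ^ p.toReal ∂μ) ^ (1 / p.toReal)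
          ≤ ((∫⁻ x, (‖g x‖₊ : ℝ≥0∞) ^ p₀.toReal ∂μ) ^ ((1 - θ) * p.toReal / p₀.toReal) *
             (∫⁻ x, (‖g x‖₊ : ℝ≥0∞) ^ p₁.toReal ∂μ) ^ (θ * p.toReal / p₁.toReal)) ^ (1 / p.toReal) :=
            ENNReal.rpow_le_rpow key (by positivity)
        _ = ((∫⁻ x, (‖g x‖₊ : ℝ≥0∞) ^ p₀.toReal ∂μ) ^ (1 / p₀.toReal)) ^ (1 - θ) *
            ((∫⁻ x, (‖g x‖₊ : ℝ≥0∞) ^ p₁.toReal ∂μ) ^ (1 / p₁.toReal)) ^ θ := by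
            rw [ENNReal.mul_rpow_of_nonneg _ _ (by positivity), ← ENNReal.rpow_mul,
              ← ENNReal.rpow_mul, ← ENNReal.rpow_mul, ← ENNReal.rpow_mul]
            congr 1
            · congr 1
              field_simp
            · congr 1
              field_simp

private lemma modulus_mono {n : ℕ} (r : ℕ) (f : EuclideanSpace ℝ (Fin n) → ℝ)
    (Ω : Set (EuclideanSpace ℝ (Fin n))) (p : ℝ≥0∞) : Monotone (modulus r f Ω p) := by
  intro t t' htt'
  exact iSup_le fun h => le_iSup_of_le ⟨h.1, h.2.trans htt'⟩ le_rfl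

private lemma modulus_measurable {n : ℕ} (r : ℕ) (f : EuclideanSpace ℝ (Fin n) → ℝ)
    (Ω : Set (EuclideanSpace ℝ (Fin n))) (p : ℝ≥0∞) : Measurable (modulus r f Ω p) :=
  (modulus_mono r f Ω p).measurable

section main

variable {n : ℕ} {Ω : Set (EuclideanSpace ℝ (Fin n))}
variable {s₀ s₁ θ s : ℝ} {p₀ p₁ p : ℝ≥0∞}

private lemma modulus_interp (r : ℕ) (f : EuclideanSpace ℝ (Fin n) → ℝ)
    (hθ0 : 0 < θ) (hθ1 : θ < 1) (hp₀ : 0 < p₀) (hp₁ : 0 < p₁)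
    (hp : p⁻¹ = ENNReal.ofReal (1 - θ) * p₀⁻¹ + ENNReal.ofReal θ * p₁⁻¹) (t : ℝ) :
    modulus r f Ω p t ≤ modulus r f Ω p₀ t ^ (1 - θ) * modulus r f Ω p₁ t ^ θ := by
  refine iSup_le fun h => ?_
  calc eLpNorm (diffOn r f Ω (h : EuclideanSpace ℝ (Fin n))) p (volume.restrict Ω)
      ≤ eLpNorm (diffOn r f Ω (h : EuclideanSpace ℝ (Fin n))) p₀ (volume.restrict Ω) ^ (1 - θ) *
        eLpNorm (diffOn r f Ω (h : EuclideanSpace ℝ (Fin n))) p₁ (volume.restrict Ω) ^ θ :=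
        eLpNorm_interp _ _ hθ0 hθ1 hp₀ hp₁ hp
    _ ≤ modulus r f Ω p₀ t ^ (1 - θ) * modulus r f Ω p₁ t ^ θ :=
        mul_le_mul'
          (ENNReal.rpow_le_rpow (le_iSup (fun h : {h : EuclideanSpace ℝ (Fin n) // ‖h‖ ≤ t} =>
            eLpNorm (diffOn r f Ω (h : EuclideanSpace ℝ (Fin n))) p₀ (volume.restrict Ω)) h)
            (by linarith))
          (ENNReal.rpow_le_rpow (le_iSup (fun h : {h : EuclideanSpace ℝ (Fin n) // ‖h‖ ≤ t} =>
            eLpNorm (diffOn r f Ω (h : EuclideanSpace ℝ (Fin n))) p₁ (volume.restrict Ω)) h)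
            hθ0.le)

private lemma G_interp (r : ℕ) (f : EuclideanSpace ℝ (Fin n) → ℝ)
    (hθ0 : 0 < θ) (hθ1 : θ < 1) (hp₀ : 0 < p₀) (hp₁ : 0 < p₁)
    (hs : s = (1 - θ) * s₀ + θ * s₁)
    (hp : p⁻¹ = ENNReal.ofReal (1 - θ) * p₀⁻¹ + ENNReal.ofReal θ * p₁⁻¹)
    {t : ℝ} (ht : t ∈ Ioo (0 : ℝ) 1) :
    ENNReal.ofReal (t ^ (-s)) * modulus r f Ω p t ≤
      (ENNReal.ofReal (t ^ (-s₀)) * modulus r f Ω p₀ t) ^ (1 - θ) *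
      (ENNReal.ofReal (t ^ (-s₁)) * modulus r f Ω p₁ t) ^ θ := by
  have ht0 : (0 : ℝ) < t := ht.1
  have aeq : ENNReal.ofReal (t ^ (-s)) =
      ENNReal.ofReal (t ^ (-s₀)) ^ (1 - θ) * ENNReal.ofReal (t ^ (-s₁)) ^ θ := by
    rw [ENNReal.ofReal_rpow_of_pos (Real.rpow_pos_of_pos ht0 (-s₀)),
      ENNReal.ofReal_rpow_of_pos (Real.rpow_pos_of_pos ht0 (-s₁)),
      ← Real.rpow_mul ht0.le, ← Real.rpow_mul ht0.le,
      ← ENNReal.ofReal_mul (Real.rpow_nonneg ht0.le _),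
      ← Real.rpow_add ht0]
    congr 1
    rw [hs]; ring
  calc ENNReal.ofReal (t ^ (-s)) * modulus r f Ω p t
      ≤ ENNReal.ofReal (t ^ (-s)) * (modulus r f Ω p₀ t ^ (1 - θ) * modulus r f Ω p₁ t ^ θ) :=
        mul_le_mul_right (modulus_interp r f hθ0 hθ1 hp₀ hp₁ hp t) _
    _ = (ENNReal.ofReal (t ^ (-s₀)) * modulus r f Ω p₀ t) ^ (1 - θ) *
        (ENNReal.ofReal (t ^ (-s₁)) * modulus r f Ω p₁ t) ^ θ := by
        rw [ENNReal.mul_rpow_of_nonneg _ _ (by linarith : (0:ℝ) ≤ 1 - θ),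
          ENNReal.mul_rpow_of_nonneg _ _ hθ0.le, aeq]
        ring

end main

private def besovB {n : ℕ} (s : ℝ) (p q : ℝ≥0∞) (r : ℕ) (f : EuclideanSpace ℝ (Fin n) → ℝ)
    (Ω : Set (EuclideanSpace ℝ (Fin n))) : ℝ≥0∞ :=
  if q = ∞ then
    ⨆ t : {t : ℝ // t ∈ Ioo (0 : ℝ) 1},
      ENNReal.ofReal ((t : ℝ) ^ (-s)) * modulus r f Ω p (t : ℝ)
  else
    (∫⁻ t in Ioo (0 : ℝ) 1,
      (ENNReal.ofReal (t ^ (-s)) * modulus r f Ω p t) ^ q.toReal *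
        ENNReal.ofReal t⁻¹) ^ (1 / q.toReal)

private lemma besovNorm_eq {n : ℕ} (s : ℝ) (p q : ℝ≥0∞) (r : ℕ)
    (f : EuclideanSpace ℝ (Fin n) → ℝ) (Ω : Set (EuclideanSpace ℝ (Fin n))) :
    besovNorm s p q r f Ω = eLpNorm f p (volume.restrict Ω) + besovB s p q r f Ω := rfl

private lemma besovB_top {n : ℕ} {s : ℝ} {p q : ℝ≥0∞} {r : ℕ}
    {f : EuclideanSpace ℝ (Fin n) → ℝ} {Ω : Set (EuclideanSpace ℝ (Fin n))} (h : q = ∞) :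
    besovB s p q r f Ω = ⨆ t : {t : ℝ // t ∈ Ioo (0 : ℝ) 1},
      ENNReal.ofReal ((t : ℝ) ^ (-s)) * modulus r f Ω p (t : ℝ) := by
  rw [besovB, if_pos h]

private lemma besovB_ne_top {n : ℕ} {s : ℝ} {p q : ℝ≥0∞} {r : ℕ}
    {f : EuclideanSpace ℝ (Fin n) → ℝ} {Ω : Set (EuclideanSpace ℝ (Fin n))} (h : q ≠ ∞) :
    besovB s p q r f Ω = (∫⁻ t in Ioo (0 : ℝ) 1,
      (ENNReal.ofReal (t ^ (-s)) * modulus r f Ω p t) ^ q.toReal *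
        ENNReal.ofReal t⁻¹) ^ (1 / q.toReal) := by
  rw [besovB, if_neg h]

section main

variable {n : ℕ} {Ω : Set (EuclideanSpace ℝ (Fin n))}
variable {s₀ s₁ θ s : ℝ} {p₀ p₁ p q₀ q₁ q : ℝ≥0∞}

private lemma Gmeas (r : ℕ) (f : EuclideanSpace ℝ (Fin n) → ℝ) (s' : ℝ) (p' : ℝ≥0∞) :
    Measurable fun t : ℝ => ENNReal.ofReal (t ^ (-s')) * modulus r f Ω p' t :=
  ((measurable_id.pow_const (-s')).ennreal_ofReal).mul (modulus_measurable r f Ω p')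

private lemma besovB_interp (r : ℕ) (f : EuclideanSpace ℝ (Fin n) → ℝ)
    (hθ0 : 0 < θ) (hθ1 : θ < 1)
    (hp₀ : 0 < p₀) (hp₁ : 0 < p₁) (hq₀ : 0 < q₀) (hq₁ : 0 < q₁)
    (hs : s = (1 - θ) * s₀ + θ * s₁)
    (hp : p⁻¹ = ENNReal.ofReal (1 - θ) * p₀⁻¹ + ENNReal.ofReal θ * p₁⁻¹)
    (hq : q⁻¹ = ENNReal.ofReal (1 - θ) * q₀⁻¹ + ENNReal.ofReal θ * q₁⁻¹) :
    besovB s p q r f Ω ≤ besovB s₀ p₀ q₀ r f Ω ^ (1 - θ) * besovB s₁ p₁ q₁ r f Ω ^ θ := by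
  have h1θ : (0:ℝ) < 1 - θ := by linarith
  rcases eq_or_ne q₀ ∞ with h₀ | h₀
  · rcases eq_or_ne q₁ ∞ with h₁ | h₁
    · -- both sup
      have hqt : q = ∞ := by
        have : q⁻¹ = 0 := by rw [hq, h₀, h₁]; simp
        simpa [ENNReal.inv_eq_zero] using this
      rw [besovB_top hqt, besovB_top h₀, besovB_top h₁]
      refine iSup_le fun t => ?_
      refine (G_interp r f hθ0 hθ1 hp₀ hp₁ hs hp t.2).trans ?_
      exact mul_le_mul'
        (ENNReal.rpow_le_rpow (le_iSup (fun t : {t : ℝ // t ∈ Ioo (0:ℝ) 1} =>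
          ENNReal.ofReal ((t : ℝ) ^ (-s₀)) * modulus r f Ω p₀ (t : ℝ)) t) h1θ.le)
        (ENNReal.rpow_le_rpow (le_iSup (fun t : {t : ℝ // t ∈ Ioo (0:ℝ) 1} =>
          ENNReal.ofReal ((t : ℝ) ^ (-s₁)) * modulus r f Ω p₁ (t : ℝ)) t) hθ0.le)
    · -- q₀ = ∞, q₁ ≠ ∞
      have hq' : q⁻¹ = ENNReal.ofReal θ * q₁⁻¹ := by rw [hq, h₀]; simp
      obtain ⟨hq0, hqt, hQ1⟩ := inv_eq_interp_top hθ0 hq₁.ne' h₁ hq'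
      have hQp : 0 < q.toReal := ENNReal.toReal_pos hq0 hqt
      have hQ1p : 0 < q₁.toReal := ENNReal.toReal_pos hq₁.ne' h₁
      have hQne : q.toReal ≠ 0 := hQp.ne'
      have hQ1ne : q₁.toReal ≠ 0 := hQ1p.ne'
      have hθne : θ ≠ 0 := hθ0.ne'
      set S := ⨆ t : {t : ℝ // t ∈ Ioo (0:ℝ) 1},
        ENNReal.ofReal ((t : ℝ) ^ (-s₀)) * modulus r f Ω p₀ (t : ℝ) with hSdef
      have hpt : ∀ t ∈ Ioo (0:ℝ) 1,
          (ENNReal.ofReal (t ^ (-s)) * modulus r f Ω p t) ^ q.toReal * ENNReal.ofReal t⁻¹ ≤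
          S ^ ((1 - θ) * q.toReal) *
            ((ENNReal.ofReal (t ^ (-s₁)) * modulus r f Ω p₁ t) ^ q₁.toReal *
              ENNReal.ofReal t⁻¹) := by
        intro t ht
        have h1 : ENNReal.ofReal (t ^ (-s)) * modulus r f Ω p t ≤
            S ^ (1 - θ) * (ENNReal.ofReal (t ^ (-s₁)) * modulus r f Ω p₁ t) ^ θ :=
          (G_interp r f hθ0 hθ1 hp₀ hp₁ hs hp ht).trans
            (mul_le_mul_left
              (ENNReal.rpow_le_rpow (le_iSup (fun t : {t : ℝ // t ∈ Ioo (0:ℝ) 1} =>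
                ENNReal.ofReal ((t : ℝ) ^ (-s₀)) * modulus r f Ω p₀ (t : ℝ)) ⟨t, ht⟩) h1θ.le) _)
        calc (ENNReal.ofReal (t ^ (-s)) * modulus r f Ω p t) ^ q.toReal * ENNReal.ofReal t⁻¹
            ≤ (S ^ (1 - θ) * (ENNReal.ofReal (t ^ (-s₁)) * modulus r f Ω p₁ t) ^ θ) ^ q.toReal *
              ENNReal.ofReal t⁻¹ := mul_le_mul_left (ENNReal.rpow_le_rpow h1 hQp.le) _
          _ = S ^ ((1 - θ) * q.toReal) *
              ((ENNReal.ofReal (t ^ (-s₁)) * modulus r f Ω p₁ t) ^ q₁.toReal *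
                ENNReal.ofReal t⁻¹) := by
              rw [ENNReal.mul_rpow_of_nonneg _ _ hQp.le, ← ENNReal.rpow_mul,
                ← ENNReal.rpow_mul, show θ * q.toReal = q₁.toReal from hQ1.symm, mul_assoc]
      have hint : (∫⁻ t in Ioo (0:ℝ) 1,
            (ENNReal.ofReal (t ^ (-s)) * modulus r f Ω p t) ^ q.toReal * ENNReal.ofReal t⁻¹) ≤
          S ^ ((1 - θ) * q.toReal) * ∫⁻ t in Ioo (0:ℝ) 1,
            (ENNReal.ofReal (t ^ (-s₁)) * modulus r f Ω p₁ t) ^ q₁.toReal *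
              ENNReal.ofReal t⁻¹ := by
        refine (setLIntegral_mono' measurableSet_Ioo hpt).trans (le_of_eq ?_)
        exact lintegral_const_mul _
          (((Gmeas r f s₁ p₁).pow_const _).mul (measurable_inv.ennreal_ofReal))
      calc besovB s p q r f Ω
          = (∫⁻ t in Ioo (0:ℝ) 1,
              (ENNReal.ofReal (t ^ (-s)) * modulus r f Ω p t) ^ q.toReal *
                ENNReal.ofReal t⁻¹) ^ (1 / q.toReal) := besovB_ne_top hqt
        _ ≤ (S ^ ((1 - θ) * q.toReal) * ∫⁻ t in Ioo (0:ℝ) 1,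
              (ENNReal.ofReal (t ^ (-s₁)) * modulus r f Ω p₁ t) ^ q₁.toReal *
                ENNReal.ofReal t⁻¹) ^ (1 / q.toReal) :=
            ENNReal.rpow_le_rpow hint (by positivity)
        _ = S ^ (1 - θ) * ((∫⁻ t in Ioo (0:ℝ) 1,
              (ENNReal.ofReal (t ^ (-s₁)) * modulus r f Ω p₁ t) ^ q₁.toReal *
                ENNReal.ofReal t⁻¹) ^ (1 / q₁.toReal)) ^ θ := by
            rw [ENNReal.mul_rpow_of_nonneg _ _ (by positivity), ← ENNReal.rpow_mul,
              ← ENNReal.rpow_mul]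
            congr 1
            · congr 1
              field_simp
            · congr 1
              rw [hQ1]
              field_simp
        _ = besovB s₀ p₀ q₀ r f Ω ^ (1 - θ) * besovB s₁ p₁ q₁ r f Ω ^ θ := by
            rw [besovB_top h₀, besovB_ne_top h₁]
  · rcases eq_or_ne q₁ ∞ with h₁ | h₁
    · -- q₀ ≠ ∞, q₁ = ∞
      have hq' : q⁻¹ = ENNReal.ofReal (1 - θ) * q₀⁻¹ := by rw [hq, h₁]; simp
      obtain ⟨hq0, hqt, hQ0⟩ := inv_eq_interp_top h1θ hq₀.ne' h₀ hq'
      have hQp : 0 < q.toReal := ENNReal.toReal_pos hq0 hqt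
      have hQ0p : 0 < q₀.toReal := ENNReal.toReal_pos hq₀.ne' h₀
      have hQne : q.toReal ≠ 0 := hQp.ne'
      have hQ0ne : q₀.toReal ≠ 0 := hQ0p.ne'
      have hθne' : 1 - θ ≠ 0 := h1θ.ne'
      set S := ⨆ t : {t : ℝ // t ∈ Ioo (0:ℝ) 1},
        ENNReal.ofReal ((t : ℝ) ^ (-s₁)) * modulus r f Ω p₁ (t : ℝ) with hSdef
      have hpt : ∀ t ∈ Ioo (0:ℝ) 1,
          (ENNReal.ofReal (t ^ (-s)) * modulus r f Ω p t) ^ q.toReal * ENNReal.ofReal t⁻¹ ≤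
          S ^ (θ * q.toReal) *
            ((ENNReal.ofReal (t ^ (-s₀)) * modulus r f Ω p₀ t) ^ q₀.toReal *
              ENNReal.ofReal t⁻¹) := by
        intro t ht
        have h1 : ENNReal.ofReal (t ^ (-s)) * modulus r f Ω p t ≤
            (ENNReal.ofReal (t ^ (-s₀)) * modulus r f Ω p₀ t) ^ (1 - θ) * S ^ θ :=
          (G_interp r f hθ0 hθ1 hp₀ hp₁ hs hp ht).trans
            (mul_le_mul_right
              (ENNReal.rpow_le_rpow (le_iSup (fun t : {t : ℝ // t ∈ Ioo (0:ℝ) 1} =>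
                ENNReal.ofReal ((t : ℝ) ^ (-s₁)) * modulus r f Ω p₁ (t : ℝ)) ⟨t, ht⟩) hθ0.le) _)
        calc (ENNReal.ofReal (t ^ (-s)) * modulus r f Ω p t) ^ q.toReal * ENNReal.ofReal t⁻¹
            ≤ ((ENNReal.ofReal (t ^ (-s₀)) * modulus r f Ω p₀ t) ^ (1 - θ) * S ^ θ) ^ q.toReal *
              ENNReal.ofReal t⁻¹ := mul_le_mul_left (ENNReal.rpow_le_rpow h1 hQp.le) _
          _ = S ^ (θ * q.toReal) *
              ((ENNReal.ofReal (t ^ (-s₀)) * modulus r f Ω p₀ t) ^ q₀.toReal *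
                ENNReal.ofReal t⁻¹) := by
              rw [ENNReal.mul_rpow_of_nonneg _ _ hQp.le, ← ENNReal.rpow_mul,
                ← ENNReal.rpow_mul, show (1 - θ) * q.toReal = q₀.toReal from hQ0.symm]
              ring
      have hint : (∫⁻ t in Ioo (0:ℝ) 1,
            (ENNReal.ofReal (t ^ (-s)) * modulus r f Ω p t) ^ q.toReal * ENNReal.ofReal t⁻¹) ≤
          S ^ (θ * q.toReal) * ∫⁻ t in Ioo (0:ℝ) 1,
            (ENNReal.ofReal (t ^ (-s₀)) * modulus r f Ω p₀ t) ^ q₀.toReal *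
              ENNReal.ofReal t⁻¹ := by
        refine (setLIntegral_mono' measurableSet_Ioo hpt).trans (le_of_eq ?_)
        exact lintegral_const_mul _
          (((Gmeas r f s₀ p₀).pow_const _).mul (measurable_inv.ennreal_ofReal))
      calc besovB s p q r f Ω
          = (∫⁻ t in Ioo (0:ℝ) 1,
              (ENNReal.ofReal (t ^ (-s)) * modulus r f Ω p t) ^ q.toReal *
                ENNReal.ofReal t⁻¹) ^ (1 / q.toReal) := besovB_ne_top hqt
        _ ≤ (S ^ (θ * q.toReal) * ∫⁻ t in Ioo (0:ℝ) 1,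
              (ENNReal.ofReal (t ^ (-s₀)) * modulus r f Ω p₀ t) ^ q₀.toReal *
                ENNReal.ofReal t⁻¹) ^ (1 / q.toReal) :=
            ENNReal.rpow_le_rpow hint (by positivity)
        _ = ((∫⁻ t in Ioo (0:ℝ) 1,
              (ENNReal.ofReal (t ^ (-s₀)) * modulus r f Ω p₀ t) ^ q₀.toReal *
                ENNReal.ofReal t⁻¹) ^ (1 / q₀.toReal)) ^ (1 - θ) * S ^ θ := by
            rw [ENNReal.mul_rpow_of_nonneg _ _ (by positivity), ← ENNReal.rpow_mul,
              ← ENNReal.rpow_mul, mul_comm]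
            congr 1
            · congr 1
              rw [hQ0]
              field_simp
            · congr 1
              field_simp
        _ = besovB s₀ p₀ q₀ r f Ω ^ (1 - θ) * besovB s₁ p₁ q₁ r f Ω ^ θ := by
            rw [besovB_ne_top h₀, besovB_top h₁]
    · -- both finite
      obtain ⟨hq0, hqt, hQ⟩ := inv_eq_interp hθ0 hθ1 hq₀.ne' h₀ hq₁.ne' h₁ hq
      have hQp : 0 < q.toReal := ENNReal.toReal_pos hq0 hqt
      have hQ0p : 0 < q₀.toReal := ENNReal.toReal_pos hq₀.ne' h₀
      have hQ1p : 0 < q₁.toReal := ENNReal.toReal_pos hq₁.ne' h₁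
      have hQne : q.toReal ≠ 0 := hQp.ne'
      have hQ0ne : q₀.toReal ≠ 0 := hQ0p.ne'
      have hQ1ne : q₁.toReal ≠ 0 := hQ1p.ne'
      set u := (1 - θ) * q.toReal / q₀.toReal with hu_def
      set v := θ * q.toReal / q₁.toReal with hv_def
      have hu : 0 < u := div_pos (mul_pos h1θ hQp) hQ0p
      have hv : 0 < v := div_pos (mul_pos hθ0 hQp) hQ1p
      have huv : u + v = 1 := by
        rw [hu_def, hv_def, show (1 - θ) * q.toReal / q₀.toReal + θ * q.toReal / q₁.toReal
            = q.toReal * ((1 - θ) * (1 / q₀.toReal) + θ * (1 / q₁.toReal)) by ring, ← hQ]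
        field_simp
      have hu1 : u < 1 := by linarith
      have hconj : Real.HolderConjugate (1 / u) (1 / v) := by
        constructor
        · simp only [one_div, inv_inv, inv_one]; exact huv
        · positivity
        · positivity
      have e₀ : ∀ x : ℝ≥0∞, x ^ ((1 - θ) * q.toReal) = (x ^ q₀.toReal) ^ u := fun x => by
        rw [← ENNReal.rpow_mul]
        congr 1
        rw [hu_def]
        field_simp
      have e₁ : ∀ x : ℝ≥0∞, x ^ (θ * q.toReal) = (x ^ q₁.toReal) ^ v := fun x => by
        rw [← ENNReal.rpow_mul]
        congr 1
        rw [hv_def]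
        field_simp
      have et : ∀ x : ℝ≥0∞, x = x ^ u * x ^ v := fun x => by
        rw [← ENNReal.rpow_add_of_nonneg _ _ hu.le hv.le, huv, ENNReal.rpow_one]
      have hpt : ∀ t ∈ Ioo (0:ℝ) 1,
          (ENNReal.ofReal (t ^ (-s)) * modulus r f Ω p t) ^ q.toReal * ENNReal.ofReal t⁻¹ ≤
          ((ENNReal.ofReal (t ^ (-s₀)) * modulus r f Ω p₀ t) ^ q₀.toReal *
            ENNReal.ofReal t⁻¹) ^ u *
          ((ENNReal.ofReal (t ^ (-s₁)) * modulus r f Ω p₁ t) ^ q₁.toReal *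
            ENNReal.ofReal t⁻¹) ^ v := by
        intro t ht
        calc (ENNReal.ofReal (t ^ (-s)) * modulus r f Ω p t) ^ q.toReal * ENNReal.ofReal t⁻¹
            ≤ ((ENNReal.ofReal (t ^ (-s₀)) * modulus r f Ω p₀ t) ^ (1 - θ) *
               (ENNReal.ofReal (t ^ (-s₁)) * modulus r f Ω p₁ t) ^ θ) ^ q.toReal *
              ENNReal.ofReal t⁻¹ :=
              mul_le_mul_left
                (ENNReal.rpow_le_rpow (G_interp r f hθ0 hθ1 hp₀ hp₁ hs hp ht) hQp.le) _
          _ = ((ENNReal.ofReal (t ^ (-s₀)) * modulus r f Ω p₀ t) ^ q₀.toReal) ^ u *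
              ((ENNReal.ofReal (t ^ (-s₁)) * modulus r f Ω p₁ t) ^ q₁.toReal) ^ v *
              ENNReal.ofReal t⁻¹ := by
              rw [ENNReal.mul_rpow_of_nonneg _ _ hQp.le, ← ENNReal.rpow_mul,
                ← ENNReal.rpow_mul, e₀, e₁]
          _ = ((ENNReal.ofReal (t ^ (-s₀)) * modulus r f Ω p₀ t) ^ q₀.toReal *
                ENNReal.ofReal t⁻¹) ^ u *
              ((ENNReal.ofReal (t ^ (-s₁)) * modulus r f Ω p₁ t) ^ q₁.toReal *
                ENNReal.ofReal t⁻¹) ^ v := by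
              rw [ENNReal.mul_rpow_of_nonneg _ _ hu.le, ENNReal.mul_rpow_of_nonneg _ _ hv.le]
              conv_lhs => rw [et (ENNReal.ofReal t⁻¹)]
              ring
      have hsimp : ∀ c : ℝ, c ≠ 0 → ∀ w : ℝ≥0∞, (w ^ c) ^ (1 / c) = w := fun c hc w => by
        rw [← ENNReal.rpow_mul, mul_one_div, div_self hc, ENNReal.rpow_one]
      have hUm : Measurable fun t : ℝ =>
          ((ENNReal.ofReal (t ^ (-s₀)) * modulus r f Ω p₀ t) ^ q₀.toReal *
            ENNReal.ofReal t⁻¹) ^ u :=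
        ((((Gmeas r f s₀ p₀).pow_const _).mul (measurable_inv.ennreal_ofReal)).pow_const _)
      have hVm : Measurable fun t : ℝ =>
          ((ENNReal.ofReal (t ^ (-s₁)) * modulus r f Ω p₁ t) ^ q₁.toReal *
            ENNReal.ofReal t⁻¹) ^ v :=
        ((((Gmeas r f s₁ p₁).pow_const _).mul (measurable_inv.ennreal_ofReal)).pow_const _)
      have holder : (∫⁻ t in Ioo (0:ℝ) 1,
            ((ENNReal.ofReal (t ^ (-s₀)) * modulus r f Ω p₀ t) ^ q₀.toReal *
              ENNReal.ofReal t⁻¹) ^ u *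
            ((ENNReal.ofReal (t ^ (-s₁)) * modulus r f Ω p₁ t) ^ q₁.toReal *
              ENNReal.ofReal t⁻¹) ^ v) ≤
          (∫⁻ t in Ioo (0:ℝ) 1,
            (ENNReal.ofReal (t ^ (-s₀)) * modulus r f Ω p₀ t) ^ q₀.toReal *
              ENNReal.ofReal t⁻¹) ^ u *
          (∫⁻ t in Ioo (0:ℝ) 1,
            (ENNReal.ofReal (t ^ (-s₁)) * modulus r f Ω p₁ t) ^ q₁.toReal *
              ENNReal.ofReal t⁻¹) ^ v := by
        have h := ENNReal.lintegral_mul_le_Lp_mul_Lq (volume.restrict (Ioo (0:ℝ) 1)) hconj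
          hUm.aemeasurable hVm.aemeasurable
        simp only [Pi.mul_apply] at h
        refine h.trans (le_of_eq ?_)
        rw [one_div_one_div, one_div_one_div]
        congr 1
        · congr 1
          exact lintegral_congr fun t => hsimp u hu.ne' _
        · congr 1
          exact lintegral_congr fun t => hsimp v hv.ne' _
      calc besovB s p q r f Ω
          = (∫⁻ t in Ioo (0:ℝ) 1,
              (ENNReal.ofReal (t ^ (-s)) * modulus r f Ω p t) ^ q.toReal *
                ENNReal.ofReal t⁻¹) ^ (1 / q.toReal) := besovB_ne_top hqt
        _ ≤ ((∫⁻ t in Ioo (0:ℝ) 1,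
              (ENNReal.ofReal (t ^ (-s₀)) * modulus r f Ω p₀ t) ^ q₀.toReal *
                ENNReal.ofReal t⁻¹) ^ u *
             (∫⁻ t in Ioo (0:ℝ) 1,
              (ENNReal.ofReal (t ^ (-s₁)) * modulus r f Ω p₁ t) ^ q₁.toReal *
                ENNReal.ofReal t⁻¹) ^ v) ^ (1 / q.toReal) :=
            ENNReal.rpow_le_rpow
              ((setLIntegral_mono' measurableSet_Ioo hpt).trans holder) (by positivity)
        _ = ((∫⁻ t in Ioo (0:ℝ) 1,
              (ENNReal.ofReal (t ^ (-s₀)) * modulus r f Ω p₀ t) ^ q₀.toReal *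
                ENNReal.ofReal t⁻¹) ^ (1 / q₀.toReal)) ^ (1 - θ) *
            ((∫⁻ t in Ioo (0:ℝ) 1,
              (ENNReal.ofReal (t ^ (-s₁)) * modulus r f Ω p₁ t) ^ q₁.toReal *
                ENNReal.ofReal t⁻¹) ^ (1 / q₁.toReal)) ^ θ := by
            rw [ENNReal.mul_rpow_of_nonneg _ _ (by positivity), ← ENNReal.rpow_mul,
              ← ENNReal.rpow_mul, ← ENNReal.rpow_mul, ← ENNReal.rpow_mul]
            congr 1
            · congr 1
              rw [hu_def]
              field_simp
            · congr 1
              rw [hv_def]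
              field_simp
        _ = besovB s₀ p₀ q₀ r f Ω ^ (1 - θ) * besovB s₁ p₁ q₁ r f Ω ^ θ := by
            rw [besovB_ne_top h₀, besovB_ne_top h₁]

end main


/-- Gagliardo–Nirenberg type inequality for Besov spaces defined by differences on a
domain `Ω`: with `s = (1-θ)s₀ + θs₁`, `1/p = (1-θ)/p₀ + θ/p₁`, `1/q = (1-θ)/q₀ + θ/q₁`,
`‖f|B^s_{p,q}(Ω)‖ ≤ C ‖f|B^{s₀}_{p₀,q₀}(Ω)‖^{1-θ} ‖f|B^{s₁}_{p₁,q₁}(Ω)‖^θ`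
for all `f` in the intersection of the two spaces. -/
theorem stmt_4 {n : ℕ} (Ω : Set (EuclideanSpace ℝ (Fin n))) (hΩ : MeasurableSet Ω)
    (s₀ s₁ θ : ℝ) (p₀ p₁ q₀ q₁ : ℝ≥0∞)
    (hs₀ : 0 < s₀) (hs₁ : 0 < s₁)
    (hp₀ : 0 < p₀) (hp₁ : 0 < p₁) (hq₀ : 0 < q₀) (hq₁ : 0 < q₁)
    (hθ : θ ∈ Ioo (0 : ℝ) 1)
    (s : ℝ) (p q : ℝ≥0∞)
    (hs : s = (1 - θ) * s₀ + θ * s₁)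
    (hp : p⁻¹ = ENNReal.ofReal (1 - θ) * p₀⁻¹ + ENNReal.ofReal θ * p₁⁻¹)
    (hq : q⁻¹ = ENNReal.ofReal (1 - θ) * q₀⁻¹ + ENNReal.ofReal θ * q₁⁻¹)
    (r : ℕ) (hr : max s₀ s₁ < r) :
    ∃ C : ℝ≥0∞, 0 < C ∧ C ≠ ∞ ∧ ∀ f : EuclideanSpace ℝ (Fin n) → ℝ,
      besovNorm s₀ p₀ q₀ r f Ω ≠ ∞ → besovNorm s₁ p₁ q₁ r f Ω ≠ ∞ →
        besovNorm s p q r f Ω ≤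
          C * besovNorm s₀ p₀ q₀ r f Ω ^ (1 - θ) * besovNorm s₁ p₁ q₁ r f Ω ^ θ := by
  obtain ⟨hθ0, hθ1⟩ := hθ
  refine ⟨2, by norm_num, by norm_num, fun f _ _ => ?_⟩
  have h1θ : (0:ℝ) < 1 - θ := by linarith
  have hA : eLpNorm f p (volume.restrict Ω) ≤
      eLpNorm f p₀ (volume.restrict Ω) ^ (1 - θ) * eLpNorm f p₁ (volume.restrict Ω) ^ θ :=
    eLpNorm_interp _ _ hθ0 hθ1 hp₀ hp₁ hp
  have hB : besovB s p q r f Ω ≤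
      besovB s₀ p₀ q₀ r f Ω ^ (1 - θ) * besovB s₁ p₁ q₁ r f Ω ^ θ :=
    besovB_interp r f hθ0 hθ1 hp₀ hp₁ hq₀ hq₁ hs hp hq
  rw [besovNorm_eq, besovNorm_eq, besovNorm_eq]
  calc eLpNorm f p (volume.restrict Ω) + besovB s p q r f Ω
      ≤ eLpNorm f p₀ (volume.restrict Ω) ^ (1 - θ) * eLpNorm f p₁ (volume.restrict Ω) ^ θ +
        besovB s₀ p₀ q₀ r f Ω ^ (1 - θ) * besovB s₁ p₁ q₁ r f Ω ^ θ := add_le_add hA hB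
    _ ≤ (eLpNorm f p₀ (volume.restrict Ω) + besovB s₀ p₀ q₀ r f Ω) ^ (1 - θ) *
          (eLpNorm f p₁ (volume.restrict Ω) + besovB s₁ p₁ q₁ r f Ω) ^ θ +
        (eLpNorm f p₀ (volume.restrict Ω) + besovB s₀ p₀ q₀ r f Ω) ^ (1 - θ) *
          (eLpNorm f p₁ (volume.restrict Ω) + besovB s₁ p₁ q₁ r f Ω) ^ θ :=
        add_le_add
          (mul_le_mul' (ENNReal.rpow_le_rpow le_self_add h1θ.le)
            (ENNReal.rpow_le_rpow le_self_add hθ0.le))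
          (mul_le_mul' (ENNReal.rpow_le_rpow le_add_self h1θ.le)
            (ENNReal.rpow_le_rpow le_add_self hθ0.le))
    _ = 2 * (eLpNorm f p₀ (volume.restrict Ω) + besovB s₀ p₀ q₀ r f Ω) ^ (1 - θ) *
          (eLpNorm f p₁ (volume.restrict Ω) + besovB s₁ p₁ q₁ r f Ω) ^ θ := by
        rw [← two_mul, ← mul_assoc]

end
end

section
/- Let ψ : ℝ^{n−1} → ℝ be Lipschitz and Ω = {(x', x_n) : x_n > ψ(x'), |x'| < 1}. Fix an integer k ≥ 1, h ∈ ℝ^n with 0 < |h| ≤ 1, and j ∈ ℕ_0. Define Ω^h = {x ∈ Ω : [x, x+kh] ⊂ Ω} and Ω^h_j = {x ∈ Ω^h : 2^{−j} ≤ min_{y ∈ [x,x+kh]} dist(y, ∂Ω) ≤ 2^{−j+1}}. Then the Lebesgue measure of Ω^h_j satisfies |Ω^h_j| ≤ C 2^{−j} with a constant C independent of j and h. -/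
open Metric MeasureTheory Set
open scoped NNReal ENNReal

noncomputable section

/-- Projection of a point of `ℝ^{n+1}` onto its first `n` Euclidean coordinates. -/
def projE {n : ℕ} (x : EuclideanSpace ℝ (Fin (n + 1))) : EuclideanSpace ℝ (Fin n) :=
  WithLp.toLp 2 (fun i : Fin n => x i.castSucc)

/-- The bounded Lipschitz model domain `Ω = {(x',x_n) : x_n > ψ(x'), |x'| < 1}`. -/
def lipDom {n : ℕ} (ψ : EuclideanSpace ℝ (Fin n) → ℝ) :
    Set (EuclideanSpace ℝ (Fin (n + 1))) :=
  {x | ψ (projE x) < x (Fin.last n) ∧ ‖projE x‖ < 1}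

/-- Its boundary graph `Γ = {(x', ψ(x')) : |x'| < 1}`. -/
def lipGraph {n : ℕ} (ψ : EuclideanSpace ℝ (Fin n) → ℝ) :
    Set (EuclideanSpace ℝ (Fin (n + 1))) :=
  {x | x (Fin.last n) = ψ (projE x) ∧ ‖projE x‖ < 1}

/-! ### Auxiliary lemmas -/

lemma abs_coord_le_norm {m : ℕ} (x : EuclideanSpace ℝ (Fin m)) (i : Fin m) : |x i| ≤ ‖x‖ := by
  rw [EuclideanSpace.norm_eq]
  have h1 : |x i| = Real.sqrt (‖x i‖ ^ 2) := by
    rw [Real.norm_eq_abs, Real.sqrt_sq_eq_abs, abs_abs]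
  rw [h1]
  apply Real.sqrt_le_sqrt
  exact Finset.single_le_sum (f := fun i => ‖x i‖ ^ 2) (fun j _ => sq_nonneg _)
    (Finset.mem_univ i)

lemma projE_sub {n : ℕ} (x y : EuclideanSpace ℝ (Fin (n + 1))) :
    projE (x - y) = projE x - projE y := rfl

lemma norm_projE_le {n : ℕ} (x : EuclideanSpace ℝ (Fin (n + 1))) : ‖projE x‖ ≤ ‖x‖ := by
  rw [EuclideanSpace.norm_eq, EuclideanSpace.norm_eq]
  apply Real.sqrt_le_sqrt
  rw [Fin.sum_univ_castSucc]
  have h : (∑ i : Fin n, ‖projE x i‖ ^ 2) = ∑ i : Fin n, ‖x i.castSucc‖ ^ 2 := rfl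
  rw [h]
  nlinarith [sq_nonneg ‖x (Fin.last n)‖]

lemma lipGraph_nonempty {n : ℕ} (ψ : EuclideanSpace ℝ (Fin n) → ℝ) :
    (lipGraph ψ).Nonempty := by
  have hp : projE (WithLp.toLp 2 (fun i => if hi : i = Fin.last n then ψ 0 else (0:ℝ)) :
      EuclideanSpace ℝ (Fin (n + 1))) =
      (0 : EuclideanSpace ℝ (Fin n)) := by
    ext i
    simp [projE, (Fin.castSucc_lt_last i).ne]
  refine ⟨WithLp.toLp 2 (fun i => if hi : i = Fin.last n then ψ 0 else 0), ?_, ?_⟩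
  · show (if hi : Fin.last n = Fin.last n then ψ 0 else (0:ℝ)) = _
    rw [hp, dif_pos rfl]
  · rw [hp]; simp

/-- Key lower bound for the distance to the graph from a point of the domain:
`dist(x, Γ) ≥ (x_n - ψ(x'))/(1+L)`. -/
lemma infDist_lower {n : ℕ} {ψ : EuclideanSpace ℝ (Fin n) → ℝ} {L : ℝ≥0}
    (hψ : LipschitzWith L ψ) {x : EuclideanSpace ℝ (Fin (n + 1))} (hx : x ∈ lipDom ψ) :
    (x (Fin.last n) - ψ (projE x)) / (1 + (L : ℝ)) ≤ infDist x (lipGraph ψ) := by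
  have hL1 : (0:ℝ) < 1 + (L:ℝ) := by positivity
  set d : ℝ := x (Fin.last n) - ψ (projE x) with hd
  have hd0 : 0 < d := sub_pos.2 hx.1
  by_contra hcon
  push_neg at hcon
  obtain ⟨w, hw, hdist⟩ := (infDist_lt_iff (lipGraph_nonempty ψ)).1 hcon
  have h1 : ‖projE x - projE w‖ ≤ dist x w := by
    rw [dist_eq_norm, ← projE_sub]
    exact norm_projE_le _
  have h2 : x (Fin.last n) - w (Fin.last n) ≤ dist x w := by
    rw [dist_eq_norm]
    have habs := abs_coord_le_norm (x - w) (Fin.last n)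
    have hxw : (x - w) (Fin.last n) = x (Fin.last n) - w (Fin.last n) := rfl
    rw [hxw] at habs
    exact (le_abs_self _).trans habs
  have hψw : ψ (projE w) - ψ (projE x) ≤ (L:ℝ) * ‖projE x - projE w‖ := by
    calc ψ (projE w) - ψ (projE x) ≤ dist (ψ (projE w)) (ψ (projE x)) := by
          rw [Real.dist_eq]; exact le_abs_self _
      _ ≤ (L:ℝ) * dist (projE w) (projE x) := hψ.dist_le_mul _ _
      _ = (L:ℝ) * ‖projE x - projE w‖ := by rw [dist_eq_norm, norm_sub_rev]
  have hwlast : w (Fin.last n) = ψ (projE w) := hw.1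
  have hdle : d ≤ (1 + (L:ℝ)) * dist x w := by
    nlinarith [NNReal.coe_nonneg L, dist_nonneg (x := x) (y := w)]
  have hlt : (1 + (L:ℝ)) * dist x w < (1 + (L:ℝ)) * (d / (1 + (L:ℝ))) :=
    mul_lt_mul_of_pos_left hdist hL1
  rw [mul_div_cancel₀ _ hL1.ne'] at hlt
  linarith

/-- Key geometric step: if the segments through `x` and `y` lie in the domain and
the segment through `y` comes `D`-close to the graph, then `y_n - x_n` is controlled. -/
lemma key_seg {n : ℕ} {ψ : EuclideanSpace ℝ (Fin n) → ℝ} {L : ℝ≥0}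
    (hψ : LipschitzWith L ψ) (c : EuclideanSpace ℝ (Fin (n + 1))) (D : ℝ)
    {x y : EuclideanSpace ℝ (Fin (n + 1))}
    (hx : segment ℝ x (x + c) ⊆ lipDom ψ)
    (hy : segment ℝ y (y + c) ⊆ lipDom ψ)
    (hyD : ∃ z ∈ segment ℝ y (y + c), infDist z (lipGraph ψ) ≤ D) :
    y (Fin.last n) - x (Fin.last n) ≤ (1 + (L:ℝ)) * D + (L:ℝ) * ‖projE y - projE x‖ := by
  obtain ⟨z, hzseg, hzD⟩ := hyD
  rw [segment_eq_image' ℝ y (y + c), add_sub_cancel_left] at hzseg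
  obtain ⟨θ, hθ, hz⟩ := hzseg
  set w := x + θ • c with hw
  have hwseg : w ∈ segment ℝ x (x + c) := by
    rw [segment_eq_image' ℝ x (x + c), add_sub_cancel_left]
    exact ⟨θ, hθ, rfl⟩
  have hwdom : w ∈ lipDom ψ := hx hwseg
  have hzdom : z ∈ lipDom ψ := hy (by
    rw [segment_eq_image' ℝ y (y + c), add_sub_cancel_left]
    exact ⟨θ, hθ, hz⟩)
  have hzw : z - w = y - x := by rw [← hz, hw]; exact add_sub_add_right_eq_sub _ _ _
  have hlast : z (Fin.last n) - w (Fin.last n) = y (Fin.last n) - x (Fin.last n) := by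
    have h1 : (z - w) (Fin.last n) = z (Fin.last n) - w (Fin.last n) := rfl
    have h2 : (y - x) (Fin.last n) = y (Fin.last n) - x (Fin.last n) := rfl
    rw [← h1, ← h2, hzw]
  have hproj : projE z - projE w = projE y - projE x := by
    rw [← projE_sub, ← projE_sub, hzw]
  have hL1 : (0:ℝ) < 1 + (L:ℝ) := by positivity
  have hdz : z (Fin.last n) - ψ (projE z) ≤ (1 + (L:ℝ)) * D := by
    have hle := (infDist_lower hψ hzdom).trans hzD
    rw [div_le_iff₀ hL1] at hle
    nlinarith
  have hψzw : ψ (projE z) - ψ (projE w) ≤ (L:ℝ) * ‖projE y - projE x‖ := by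
    calc ψ (projE z) - ψ (projE w) ≤ dist (ψ (projE z)) (ψ (projE w)) := by
          rw [Real.dist_eq]; exact le_abs_self _
      _ ≤ (L:ℝ) * dist (projE z) (projE w) := hψ.dist_le_mul _ _
      _ = (L:ℝ) * ‖projE y - projE x‖ := by rw [dist_eq_norm, hproj]
  have hwdom1 : ψ (projE w) < w (Fin.last n) := hwdom.1
  linarith

/-- The measurable equivalence splitting off the last coordinate. -/
def lipSplit (n : ℕ) : EuclideanSpace ℝ (Fin (n + 1)) ≃ᵐ ℝ × (Fin n → ℝ) :=
  (MeasurableEquiv.toLp 2 (Fin (n + 1) → ℝ)).symm.trans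
    (MeasurableEquiv.piFinSuccAbove (fun _ : Fin (n + 1) => ℝ) (Fin.last n))

lemma lipSplit_apply {n : ℕ} (x : EuclideanSpace ℝ (Fin (n + 1))) :
    lipSplit n x = (x (Fin.last n), fun i => x (Fin.castSucc i)) := by
  have h1 : lipSplit n x = (x (Fin.last n), fun i => x ((Fin.last n).succAbove i)) := rfl
  rw [h1, Fin.succAbove_last]

lemma lipSplit_measurePreserving (n : ℕ) :
    MeasurePreserving (lipSplit n) volume (Measure.prod volume volume) := by
  have mp1 := EuclideanSpace.volume_preserving_symm_measurableEquiv_toLp (Fin (n + 1))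
  have mp2 := measurePreserving_piFinSuccAbove (fun _ : Fin (n + 1) => (volume : Measure ℝ))
    (Fin.last n)
  rw [← volume_pi, ← volume_pi] at mp2
  have hcomp := mp2.comp mp1
  rwa [← MeasurableEquiv.coe_trans] at hcomp

/-- `projE` as a linear map. -/
def projLin (n : ℕ) : EuclideanSpace ℝ (Fin (n + 1)) →ₗ[ℝ] EuclideanSpace ℝ (Fin n) where
  toFun := projE
  map_add' := fun _ _ => rfl
  map_smul' := fun _ _ => rfl

/-- The last coordinate as a linear map. -/
def lastLin (n : ℕ) : EuclideanSpace ℝ (Fin (n + 1)) →ₗ[ℝ] ℝ where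
  toFun := fun x => x (Fin.last n)
  map_add' := fun _ _ => rfl
  map_smul' := fun _ _ => rfl

lemma continuous_projE {n : ℕ} : Continuous fun x : EuclideanSpace ℝ (Fin (n + 1)) => projE x :=
  (projLin n).continuous_of_finiteDimensional

lemma continuous_lastE {n : ℕ} :
    Continuous fun x : EuclideanSpace ℝ (Fin (n + 1)) => x (Fin.last n) :=
  (lastLin n).continuous_of_finiteDimensional

/-- Geometric measure estimate for Lipschitz domains: with
`Ω^h = {x ∈ Ω : [x,x+kh] ⊂ Ω}` and
`Ω^h_j = {x ∈ Ω^h : 2^{-j} ≤ min_{y∈[x,x+kh]} dist(y,Γ) ≤ 2^{-j+1}}`, the Lebesgue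
measure of `Ω^h_j` is at most `C 2^{-j}`, with `C` independent of `j` and `h`. -/
theorem stmt_6 (n : ℕ) (ψ : EuclideanSpace ℝ (Fin n) → ℝ) (L : ℝ≥0)
    (hψ : LipschitzWith L ψ) (k : ℕ) (hk : 1 ≤ k) :
    ∃ C : ℝ, 0 < C ∧ ∀ h : EuclideanSpace ℝ (Fin (n + 1)), 0 < ‖h‖ → ‖h‖ ≤ 1 → ∀ j : ℕ,
      volume {x : EuclideanSpace ℝ (Fin (n + 1)) |
          x ∈ lipDom ψ ∧ segment ℝ x (x + (k : ℝ) • h) ⊆ lipDom ψ ∧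
          (∀ y ∈ segment ℝ x (x + (k : ℝ) • h), (2 : ℝ) ^ (-(j : ℤ)) ≤ infDist y (lipGraph ψ)) ∧
          (∃ y ∈ segment ℝ x (x + (k : ℝ) • h), infDist y (lipGraph ψ) ≤ (2 : ℝ) ^ (1 - (j : ℤ)))}
        ≤ ENNReal.ofReal (C * (2 : ℝ) ^ (-(j : ℤ))) := by
  classical
  refine ⟨2 ^ (n + 2) * (1 + (L:ℝ)), by positivity, ?_⟩
  intro h _ _ j
  set S : Set (EuclideanSpace ℝ (Fin (n + 1))) := {x : EuclideanSpace ℝ (Fin (n + 1)) |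
      x ∈ lipDom ψ ∧ segment ℝ x (x + (k : ℝ) • h) ⊆ lipDom ψ ∧
      (∀ y ∈ segment ℝ x (x + (k : ℝ) • h), (2 : ℝ) ^ (-(j : ℤ)) ≤ infDist y (lipGraph ψ)) ∧
      (∃ y ∈ segment ℝ x (x + (k : ℝ) • h), infDist y (lipGraph ψ) ≤ (2 : ℝ) ^ (1 - (j : ℤ)))}
    with hSdef
  have hD0 : (0:ℝ) < (2 : ℝ) ^ (1 - (j : ℤ)) := by positivity
  have hL0 : (0:ℝ) ≤ (L:ℝ) := NNReal.coe_nonneg L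
  set ℓ : ℝ := (1 + (L:ℝ)) * (2 : ℝ) ^ (1 - (j : ℤ)) with hldef
  have hl0 : 0 < ℓ := by rw [hldef]; positivity
  -- Key inequality on S
  have keyS : ∀ x ∈ S, ∀ y ∈ S,
      y (Fin.last n) - x (Fin.last n) ≤ ℓ + (L:ℝ) * ‖projE y - projE x‖ := by
    intro x hx y hy
    exact key_seg hψ ((k : ℝ) • h) _ hx.2.1 hy.2.1 hy.2.2.2
  set T : Set (EuclideanSpace ℝ (Fin (n + 1))) := closure S with hTdef
  -- the key inequality passes to the closure
  have keyT : ∀ x ∈ T, ∀ y ∈ T,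
      y (Fin.last n) - x (Fin.last n) ≤ ℓ + (L:ℝ) * ‖projE y - projE x‖ := by
    have hcont : Continuous fun p :
        EuclideanSpace ℝ (Fin (n + 1)) × EuclideanSpace ℝ (Fin (n + 1)) =>
        p.2 (Fin.last n) - p.1 (Fin.last n) - (L:ℝ) * ‖projE p.2 - projE p.1‖ := by
      apply Continuous.sub
      · exact (continuous_lastE.comp continuous_snd).sub (continuous_lastE.comp continuous_fst)
      · exact continuous_const.mul
          (((continuous_projE.comp continuous_snd).sub
            (continuous_projE.comp continuous_fst)).norm)
    have hclosed : IsClosed {p :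
        EuclideanSpace ℝ (Fin (n + 1)) × EuclideanSpace ℝ (Fin (n + 1)) |
        p.2 (Fin.last n) - p.1 (Fin.last n) - (L:ℝ) * ‖projE p.2 - projE p.1‖ ≤ ℓ} :=
      isClosed_le hcont continuous_const
    have hsub : S ×ˢ S ⊆ {p :
        EuclideanSpace ℝ (Fin (n + 1)) × EuclideanSpace ℝ (Fin (n + 1)) |
        p.2 (Fin.last n) - p.1 (Fin.last n) - (L:ℝ) * ‖projE p.2 - projE p.1‖ ≤ ℓ} := by
      rintro ⟨x, y⟩ ⟨hx, hy⟩
      have := keyS x hx y hy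
      simp only [Set.mem_setOf_eq]
      linarith
    intro x hx y hy
    have hmem : (x, y) ∈ closure (S ×ˢ S) := by
      rw [closure_prod_eq]
      exact ⟨hx, hy⟩
    have := closure_minimal hsub hclosed hmem
    simp only [Set.mem_setOf_eq] at this
    linarith
  have normT : ∀ x ∈ T, ‖projE x‖ ≤ 1 := by
    have hclosed : IsClosed {x : EuclideanSpace ℝ (Fin (n + 1)) | ‖projE x‖ ≤ 1} :=
      isClosed_le continuous_projE.norm continuous_const
    intro x hx
    exact closure_minimal (fun z hz => le_of_lt hz.1.2) hclosed hx
  -- measure computation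
  have hTm : MeasurableSet T := isClosed_closure.measurableSet
  have hU : MeasurableSet (⇑(lipSplit n) '' T) :=
    (MeasurableEquiv.measurableSet_image _).2 hTm
  have hvolT : volume T = (Measure.prod volume volume) (⇑(lipSplit n) '' T) := by
    have hpre := (lipSplit_measurePreserving n).measure_preimage hU.nullMeasurableSet
    rwa [Set.preimage_image_eq T (lipSplit n).injective] at hpre
  have hboxm : MeasurableSet (Set.univ.pi fun _ : Fin n => Icc (-1:ℝ) 1) :=
    MeasurableSet.univ_pi fun _ => measurableSet_Icc
  have hboxvol : volume (Set.univ.pi fun _ : Fin n => Icc (-1:ℝ) 1) = ENNReal.ofReal 2 ^ n := by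
    rw [volume_pi_pi]
    have : ∀ i : Fin n, volume (Icc (-1:ℝ) 1) = ENNReal.ofReal 2 := by
      intro i; rw [Real.volume_Icc]; norm_num
    rw [Finset.prod_congr rfl fun i _ => this i, Finset.prod_const, Finset.card_univ,
      Fintype.card_fin]
  -- section bound
  have hsec : ∀ y : Fin n → ℝ,
      volume ((fun t => (t, y)) ⁻¹' (⇑(lipSplit n) '' T)) ≤
        (Set.univ.pi fun _ : Fin n => Icc (-1:ℝ) 1).indicator
          (fun _ => ENNReal.ofReal (2 * ℓ)) y := by
    intro y
    rcases eq_empty_or_nonempty ((fun t => (t, y)) ⁻¹' (⇑(lipSplit n) '' T)) with he | hne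
    · rw [he]; simp
    · obtain ⟨t₀, ht₀⟩ := hne
      obtain ⟨x₀, hx₀T, hx₀⟩ := ht₀
      rw [lipSplit_apply] at hx₀
      obtain ⟨h01, h02⟩ := Prod.ext_iff.1 hx₀
      have hybox : y ∈ Set.univ.pi fun _ : Fin n => Icc (-1:ℝ) 1 := by
        intro i _
        have hyi : y i = projE x₀ i := (congrFun h02 i).symm
        have habs : |y i| ≤ 1 := by
          rw [hyi]
          exact (abs_coord_le_norm (projE x₀) i).trans (normT x₀ hx₀T)
        exact abs_le.1 habs
      rw [Set.indicator_of_mem hybox]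
      have hsub : ((fun t => (t, y)) ⁻¹' (⇑(lipSplit n) '' T)) ⊆ Icc (t₀ - ℓ) (t₀ + ℓ) := by
        rintro t ⟨x, hxT, hx⟩
        rw [lipSplit_apply] at hx
        obtain ⟨g1, g2⟩ := Prod.ext_iff.1 hx
        have hpp : projE x = projE x₀ := by
          ext i
          exact (congrFun g2 i).trans (congrFun h02 i).symm
        have k1 := keyT x₀ hx₀T x hxT
        have k2 := keyT x hxT x₀ hx₀T
        rw [hpp, sub_self, norm_zero, mul_zero, add_zero] at k1
        have hpp' : projE x₀ - projE x = 0 := by rw [hpp, sub_self]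
        rw [hpp', norm_zero, mul_zero, add_zero] at k2
        dsimp only at g1 h01
        rw [g1, h01] at k1
        rw [g1, h01] at k2
        exact ⟨by linarith, by linarith⟩
      calc volume ((fun t => (t, y)) ⁻¹' (⇑(lipSplit n) '' T))
          ≤ volume (Icc (t₀ - ℓ) (t₀ + ℓ)) := measure_mono hsub
        _ = ENNReal.ofReal (2 * ℓ) := by rw [Real.volume_Icc]; ring_nf
  calc volume S ≤ volume T := measure_mono subset_closure
    _ = (Measure.prod volume volume) (⇑(lipSplit n) '' T) := hvolT
    _ = ∫⁻ y, volume ((fun t => (t, y)) ⁻¹' (⇑(lipSplit n) '' T)) ∂volume :=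
        Measure.prod_apply_symm hU
    _ ≤ ∫⁻ y, (Set.univ.pi fun _ : Fin n => Icc (-1:ℝ) 1).indicator
          (fun _ => ENNReal.ofReal (2 * ℓ)) y ∂volume := lintegral_mono hsec
    _ = ENNReal.ofReal (2 * ℓ) * volume (Set.univ.pi fun _ : Fin n => Icc (-1:ℝ) 1) := by
        rw [lintegral_indicator hboxm, setLIntegral_const]
    _ = ENNReal.ofReal (2 * ℓ * 2 ^ n) := by
        rw [hboxvol, ← ENNReal.ofReal_pow (by norm_num : (0:ℝ) ≤ 2),
          ← ENNReal.ofReal_mul (by positivity)]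
    _ ≤ ENNReal.ofReal (2 ^ (n + 2) * (1 + (L:ℝ)) * (2 : ℝ) ^ (-(j : ℤ))) := by
        apply ENNReal.ofReal_le_ofReal
        apply le_of_eq
        have h2 : (2:ℝ) ^ (1 - (j:ℤ)) = 2 * (2:ℝ) ^ (-(j:ℤ)) := by
          rw [sub_eq_add_neg, zpow_add₀ (by norm_num : (2:ℝ) ≠ 0), zpow_one]
        rw [hldef, h2, pow_add]
        ring
end
end
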